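/- Let {φᵢ}ᵢ₌₁ⁿ ⊂ ℝ^d, {yᵢ}ᵢ₌₁ⁿ ⊂ ℝ, λ > 0, Λ = ∑ᵢ φᵢφᵢᵀ + λI, and ŵ = Λ⁻¹ ∑ᵢ φᵢyᵢ. Then for any w* ∈ ℝ^d: ‖ŵ − w*‖_Λ ≤ ‖∑ᵢ φᵢ(yᵢ − φᵢᵀw*)‖_{Λ⁻¹} + √λ·‖w*‖. -/

import Mathlib

open Matrix Finset
open scoped MatrixOrder

private lemma vmv_mulVec {d : ℕ} (v w x : Fin d → ℝ) :
    vecMulVec v w *ᵥ x = (w ⬝ᵥ x) • v := by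
  ext j
  simp [vecMulVec_apply, mulVec, dotProduct, Finset.sum_mul, Finset.mul_sum,
    mul_comm, mul_assoc, mul_left_comm]

private lemma sum_mulVec' {d n : ℕ} (A : Fin n → Matrix (Fin d) (Fin d) ℝ) (x : Fin d → ℝ) :
    (∑ i, A i) *ᵥ x = ∑ i, A i *ᵥ x := by
  ext j
  simp [mulVec, dotProduct, Matrix.sum_apply, Finset.sum_mul]
  rw [Finset.sum_comm]

private lemma dot_sum {d n : ℕ} (x : Fin d → ℝ) (f : Fin n → Fin d → ℝ) :
    x ⬝ᵥ (∑ i, f i) = ∑ i, x ⬝ᵥ f i := by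
  simp only [dotProduct, Finset.sum_apply, Finset.mul_sum]
  rw [Finset.sum_comm]

private lemma cs_sum {d : ℕ} (a b : Fin d → ℝ) :
    (∑ j, a j * b j) ≤ Real.sqrt (∑ j, a j ^ 2) * Real.sqrt (∑ j, b j ^ 2) := by
  have h := Finset.sum_mul_sq_le_sq_mul_sq Finset.univ a b
  calc (∑ j, a j * b j) ≤ |∑ j, a j * b j| := le_abs_self _
    _ = Real.sqrt ((∑ j, a j * b j) ^ 2) := (Real.sqrt_sq_eq_abs _).symm
    _ ≤ Real.sqrt ((∑ j, a j ^ 2) * (∑ j, b j ^ 2)) := Real.sqrt_le_sqrt h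
    _ = _ := Real.sqrt_mul (by positivity) _

private lemma tri_sum {d : ℕ} (a b : Fin d → ℝ) :
    Real.sqrt (∑ j, (a j - b j) ^ 2) ≤
      Real.sqrt (∑ j, a j ^ 2) + Real.sqrt (∑ j, b j ^ 2) := by
  have hcs := cs_sum a b
  have h1 : (∑ j, (a j - b j) ^ 2) ≤
      (Real.sqrt (∑ j, a j ^ 2) + Real.sqrt (∑ j, b j ^ 2)) ^ 2 := by
    have ea : Real.sqrt (∑ j, a j ^ 2) ^ 2 = ∑ j, a j ^ 2 := Real.sq_sqrt (by positivity)
    have eb : Real.sqrt (∑ j, b j ^ 2) ^ 2 = ∑ j, b j ^ 2 := Real.sq_sqrt (by positivity)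
    have expand : (∑ j, (a j - b j) ^ 2) =
        (∑ j, a j ^ 2) - 2 * (∑ j, a j * b j) + (∑ j, b j ^ 2) := by
      rw [Finset.sum_congr rfl (fun j _ => show (a j - b j) ^ 2
        = a j ^ 2 - 2 * (a j * b j) + b j ^ 2 by ring)]
      rw [Finset.sum_add_distrib, Finset.sum_sub_distrib, ← Finset.mul_sum]
    have hcs2 : -(∑ j, a j * b j) ≤ Real.sqrt (∑ j, a j ^ 2) * Real.sqrt (∑ j, b j ^ 2) := by
      have h2 := cs_sum a (fun j => -b j)
      simp only [mul_neg, Finset.sum_neg_distrib, neg_sq] at h2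
      simpa using h2
    rw [expand, add_sq, ea, eb]
    nlinarith [hcs2]
  calc Real.sqrt (∑ j, (a j - b j) ^ 2) ≤
      Real.sqrt ((Real.sqrt (∑ j, a j ^ 2) + Real.sqrt (∑ j, b j ^ 2)) ^ 2) :=
        Real.sqrt_le_sqrt h1
    _ = _ := by rw [Real.sqrt_sq (by positivity)]

/-- Regularized least squares error decomposition:
`‖ŵ − w*‖_Λ ≤ ‖∑ᵢ φᵢ (yᵢ − φᵢᵀ w*)‖_{Λ⁻¹} + √λ ‖w*‖`. -/
theorem stmt_4 (d n : ℕ) (lam : ℝ) (hlam : 0 < lam)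
    (φ : Fin n → Fin d → ℝ) (y : Fin n → ℝ)
    (Λ : Matrix (Fin d) (Fin d) ℝ)
    (hΛ : Λ = (∑ i, vecMulVec (φ i) (φ i)) + lam • (1 : Matrix (Fin d) (Fin d) ℝ))
    (w : Fin d → ℝ) (hw : w = Λ⁻¹ *ᵥ (∑ i, y i • φ i))
    (wstar : Fin d → ℝ) :
    Real.sqrt ((w - wstar) ⬝ᵥ (Λ *ᵥ (w - wstar))) ≤
      Real.sqrt ((∑ i, (y i - φ i ⬝ᵥ wstar) • φ i) ⬝ᵥ
        (Λ⁻¹ *ᵥ (∑ i, (y i - φ i ⬝ᵥ wstar) • φ i)))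
      + Real.sqrt lam * Real.sqrt (∑ j, (wstar j) ^ 2) := by
  -- Λ applied to any vector
  have hΛv : ∀ x : Fin d → ℝ, Λ *ᵥ x = (∑ i, (φ i ⬝ᵥ x) • φ i) + lam • x := by
    intro x
    rw [hΛ, Matrix.add_mulVec, sum_mulVec', Matrix.smul_mulVec, Matrix.one_mulVec]
    simp only [vmv_mulVec]
  -- quadratic form of Λ
  have hquad : ∀ x : Fin d → ℝ, x ⬝ᵥ (Λ *ᵥ x) = (∑ i, (φ i ⬝ᵥ x) ^ 2) + lam * ∑ j, x j ^ 2 := by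
    intro x
    rw [hΛv, dotProduct_add, dot_sum]
    congr 1
    · refine Finset.sum_congr rfl fun i _ => ?_
      rw [dotProduct_smul, smul_eq_mul, dotProduct_comm]; ring
    · simp only [dotProduct, Pi.smul_apply, smul_eq_mul, Finset.mul_sum]
      exact Finset.sum_congr rfl fun j _ => by ring
  -- Λ is positive definite
  have hpd : Λ.PosDef := by
    refine Matrix.PosDef.of_dotProduct_mulVec_pos ?_ ?_
    · rw [hΛ]
      ext i j
      simp only [Matrix.conjTranspose_apply, Matrix.add_apply, Matrix.sum_apply,
        vecMulVec_apply, Matrix.smul_apply, Matrix.one_apply, star_trivial, smul_eq_mul]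
      rcases eq_or_ne i j with h | h
      · subst h; ring
      · simp [h, Ne.symm h, mul_comm]
    · intro x hx
      have hx2 : 0 < ∑ j, x j ^ 2 := by
        have : ∃ j, x j ≠ 0 := by
          by_contra h
          push_neg at h
          exact hx (funext h)
        obtain ⟨j, hj⟩ := this
        have : 0 < x j ^ 2 := by positivity
        exact lt_of_lt_of_le this (Finset.single_le_sum (f := fun j => x j ^ 2) (fun i _ => sq_nonneg _) (Finset.mem_univ j))
      have : (star x) ⬝ᵥ (Λ *ᵥ x) = x ⬝ᵥ (Λ *ᵥ x) := by simp
      rw [this, hquad]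
      have : 0 ≤ ∑ i, (φ i ⬝ᵥ x) ^ 2 := by positivity
      nlinarith
  have hunit := hpd.isUnit
  have hMpd : (Λ⁻¹).PosDef := hpd.inv
  have hcancel : ∀ v : Fin d → ℝ, Λ *ᵥ (Λ⁻¹ *ᵥ v) = v := by
    intro v
    rw [Matrix.mulVec_mulVec, Matrix.mul_nonsing_inv _ ((Matrix.isUnit_iff_isUnit_det _).1 hunit),
      Matrix.one_mulVec]
  have hcancel' : ∀ v : Fin d → ℝ, Λ⁻¹ *ᵥ (Λ *ᵥ v) = v := by
    intro v
    rw [Matrix.mulVec_mulVec, Matrix.nonsing_inv_mul _ ((Matrix.isUnit_iff_isUnit_det _).1 hunit),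
      Matrix.one_mulVec]
  set ξ : Fin d → ℝ := ∑ i, (y i - φ i ⬝ᵥ wstar) • φ i with hξ
  -- key identity
  have hkey : Λ *ᵥ (w - wstar) = ξ - lam • wstar := by
    have h1 : Λ *ᵥ w = ∑ i, y i • φ i := by rw [hw, hcancel]
    have h2 : Λ *ᵥ wstar = (∑ i, (φ i ⬝ᵥ wstar) • φ i) + lam • wstar := hΛv wstar
    rw [Matrix.mulVec_sub, h1, h2, hξ]
    simp only [sub_smul, Finset.sum_sub_distrib]
    abel
  -- square root of Λ⁻¹
  set S := CFC.sqrt (Λ⁻¹) with hS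
  have hSS : S * S = Λ⁻¹ := CFC.sqrt_mul_sqrt_self _ hMpd.posSemidef.nonneg
  have hSsymm : Sᵀ = S := by
    have : S.IsHermitian := (CFC.sqrt_nonneg (Λ⁻¹)).posSemidef.1
    simpa [Matrix.IsHermitian, Matrix.conjTranspose_eq_transpose_of_trivial] using this
  have hnorm : ∀ v : Fin d → ℝ, v ⬝ᵥ (Λ⁻¹ *ᵥ v) = ∑ j, (S *ᵥ v) j ^ 2 := by
    intro v
    rw [← hSS, ← Matrix.mulVec_mulVec, Matrix.dotProduct_mulVec, ← Matrix.mulVec_transpose,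
      hSsymm]
    simp [dotProduct, sq]
  -- main computation
  have hmain : (w - wstar) ⬝ᵥ (Λ *ᵥ (w - wstar)) =
      (ξ - lam • wstar) ⬝ᵥ (Λ⁻¹ *ᵥ (ξ - lam • wstar)) := by
    have hww : w - wstar = Λ⁻¹ *ᵥ (ξ - lam • wstar) := by rw [← hkey, hcancel']
    rw [hww, hcancel, dotProduct_comm]
  rw [hmain, hnorm, hnorm]
  have hSsub : S *ᵥ (ξ - lam • wstar) = fun j => (S *ᵥ ξ) j - lam * (S *ᵥ wstar) j := by
    ext j
    rw [Matrix.mulVec_sub, Matrix.mulVec_smul]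
    simp
  rw [hSsub]
  have htri := tri_sum (fun j => (S *ᵥ ξ) j) (fun j => lam * (S *ᵥ wstar) j)
  refine htri.trans (add_le_add le_rfl ?_)
  -- bound the regularization term
  have hlm : (∑ j, (lam * (S *ᵥ wstar) j) ^ 2) = lam ^ 2 * ∑ j, (S *ᵥ wstar) j ^ 2 := by
    rw [Finset.mul_sum]; congr 1; ext j; ring
  rw [hlm, ← hnorm]
  -- show lam^2 * (wstar ⬝ Λ⁻¹ wstar) ≤ lam * ∑ wstar^2
  set v := Λ⁻¹ *ᵥ wstar with hv
  set t := wstar ⬝ᵥ v with ht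
  have hwv : wstar = Λ *ᵥ v := (hcancel wstar).symm
  have htquad : t = (∑ i, (φ i ⬝ᵥ v) ^ 2) + lam * ∑ j, v j ^ 2 := by
    rw [ht, hwv]
    rw [show (Λ *ᵥ v) ⬝ᵥ v = v ⬝ᵥ (Λ *ᵥ v) from dotProduct_comm _ _, hquad]
  have htnonneg : 0 ≤ t := by
    rw [htquad]
    have h1 : 0 ≤ ∑ i, (φ i ⬝ᵥ v) ^ 2 := by positivity
    have h2 : 0 ≤ ∑ j, v j ^ 2 := by positivity
    nlinarith
  have htge : lam * ∑ j, v j ^ 2 ≤ t := by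
    rw [htquad]
    have : 0 ≤ ∑ i, (φ i ⬝ᵥ v) ^ 2 := by positivity
    linarith
  have hcs : t ≤ Real.sqrt (∑ j, wstar j ^ 2) * Real.sqrt (∑ j, v j ^ 2) := by
    rw [ht]
    exact cs_sum wstar v
  have hbound : lam * t ≤ ∑ j, wstar j ^ 2 := by
    rcases eq_or_lt_of_le htnonneg with h | h
    · nlinarith [Finset.sum_nonneg (fun j (_ : j ∈ Finset.univ) => sq_nonneg (wstar j))]
    · have hv2 : lam * ∑ j, v j ^ 2 ≤ t := htge
      have ht2 : t ^ 2 ≤ (∑ j, wstar j ^ 2) * (∑ j, v j ^ 2) := by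
        have := hcs
        have hw2 : (0:ℝ) ≤ ∑ j, wstar j ^ 2 := by positivity
        have hv2' : (0:ℝ) ≤ ∑ j, v j ^ 2 := by positivity
        nlinarith [Real.sq_sqrt hw2, Real.sq_sqrt hv2', Real.sqrt_nonneg (∑ j, wstar j ^ 2),
          Real.sqrt_nonneg (∑ j, v j ^ 2)]
      have hWnn : (0:ℝ) ≤ ∑ j, wstar j ^ 2 := by positivity
      have hkey2 : (lam * t) * t ≤ (∑ j, wstar j ^ 2) * t := by
        nlinarith [mul_le_mul_of_nonneg_left ht2 hlam.le,
          mul_le_mul_of_nonneg_left hv2 hWnn]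
      exact le_of_mul_le_mul_right hkey2 h
  -- conclude: sqrt (lam^2 * t) ≤ sqrt lam * sqrt (∑ wstar^2)
  have : lam ^ 2 * t ≤ lam * ∑ j, wstar j ^ 2 := by nlinarith
  calc Real.sqrt (lam ^ 2 * t) ≤ Real.sqrt (lam * ∑ j, wstar j ^ 2) := Real.sqrt_le_sqrt this
    _ = Real.sqrt lam * Real.sqrt (∑ j, wstar j ^ 2) := Real.sqrt_mul hlam.le _
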